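/- (Zeon quadratic formula) Let φ(u) = αu² + βu + γ with α, β, γ ∈ CZ_n and ⟨α⟩_0 ≠ 0, and let Δ = β² − 4αγ. Then the zero set of φ is exactly { (α^{-1}/2)(w − β) : w ∈ CZ_n, w² = Δ }. In particular: (i) if Δ = 0, then the zeros are exactly −α^{-1}β/2 + η for η ∈ CZ_n with η² = 0; (ii) if ⟨Δ⟩_0 ≠ 0, then φ has exactly two distinct zeros. -/

import Mathlib

noncomputable section

/-- The ideal of squares of generators defining the zeon algebra. -/
def zeonIdeal (n : ℕ) : Ideal (MvPolynomial (Fin n) ℂ) :=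
  Ideal.span (Set.range fun i : Fin n => (MvPolynomial.X i : MvPolynomial (Fin n) ℂ) ^ 2)

/-- The `n`-particle complex zeon algebra `CZ_n`. -/
abbrev Zeon (n : ℕ) := MvPolynomial (Fin n) ℂ ⧸ zeonIdeal n

/-- The scalar part `⟨u⟩₀` of a zeon, as a `ℂ`-algebra homomorphism. -/
def scalarPart (n : ℕ) : Zeon n →ₐ[ℂ] ℂ :=
  Ideal.Quotient.liftₐ (zeonIdeal n) (MvPolynomial.aeval fun _ => (0 : ℂ)) (by
    intro a ha
    have h : zeonIdeal n ≤ RingHom.ker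
        (MvPolynomial.aeval (R := ℂ) fun _ : Fin n => (0 : ℂ)).toRingHom := by
      rw [zeonIdeal, Ideal.span_le]
      rintro _ ⟨i, rfl⟩
      simp [RingHom.mem_ker]
    exact h ha)

/-- The dual (nilpotent) part `Du = u - ⟨u⟩₀`. -/
def dualPart (n : ℕ) (u : Zeon n) : Zeon n := u - algebraMap ℂ (Zeon n) (scalarPart n u)

/-- The generator `ζ_i`. -/
def zeta (n : ℕ) (i : Fin n) : Zeon n := Ideal.Quotient.mk _ (MvPolynomial.X i)

/-- The basis blade `ζ_I`. -/
def blade (n : ℕ) (I : Finset (Fin n)) : Zeon n :=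
  Ideal.Quotient.mk _ (∏ i ∈ I, MvPolynomial.X i)

open MvPolynomial in
lemma mk_monomial_sq (n : ℕ) (m : Fin n →₀ ℕ) (hm : m ≠ 0) (c : ℂ) :
    (Ideal.Quotient.mk (zeonIdeal n) (monomial m c)) ^ 2 = 0 := by
  rw [← map_pow, Ideal.Quotient.eq_zero_iff_mem]
  obtain ⟨i, hi⟩ : ∃ i, m i ≠ 0 := by
    by_contra h; push_neg at h; exact hm (Finsupp.ext fun i => h i)
  have h2 : Finsupp.single i 2 ≤ m + m := by
    intro j
    rcases eq_or_ne j i with rfl | hj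
    · simpa using by omega
    · simp [Finsupp.single_apply, hj.symm]
  have hexp : Finsupp.single i 2 + (m + m - Finsupp.single i 2) = m + m := by
    ext j
    have := h2 j
    simp only [Finsupp.add_apply, Finsupp.coe_tsub, Pi.sub_apply] at *
    omega
  have : (monomial m c) ^ 2 = (X i) ^ 2 * monomial (m + m - Finsupp.single i 2) (c * c) := by
    rw [X_pow_eq_monomial, monomial_mul, monomial_pow, one_mul, hexp, two_smul, sq]
  rw [this]
  exact Ideal.mul_mem_right _ _ (Ideal.subset_span ⟨i, rfl⟩)

lemma scalarPart_mk (n : ℕ) (p : MvPolynomial (Fin n) ℂ) :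
    scalarPart n (Ideal.Quotient.mk _ p) = MvPolynomial.constantCoeff p := by
  change (MvPolynomial.aeval (fun _ : Fin n => (0:ℂ))) p = _
  simp

open MvPolynomial in
lemma nilpotent_of_scalarPart_zero {n : ℕ} {u : Zeon n} (h : scalarPart n u = 0) :
    IsNilpotent u := by
  obtain ⟨p, rfl⟩ := Ideal.Quotient.mk_surjective u
  rw [scalarPart_mk] at h
  have hp : (Ideal.Quotient.mk (zeonIdeal n)) p
      = ∑ m ∈ p.support, Ideal.Quotient.mk (zeonIdeal n) (monomial m (coeff m p)) := by
    conv_lhs => rw [p.as_sum]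
    rw [map_sum]
  rw [hp]
  refine isNilpotent_sum fun m hm => ?_
  have hm0 : m ≠ 0 := by
    rintro rfl
    exact (mem_support_iff.mp hm) h
  exact ⟨2, mk_monomial_sq n m hm0 _⟩

lemma isUnit_of_scalarPart_ne_zero {n : ℕ} {u : Zeon n} (h : scalarPart n u ≠ 0) :
    IsUnit u := by
  set c := scalarPart n u
  have hn : IsNilpotent ((algebraMap ℂ (Zeon n) c⁻¹) * (u - algebraMap ℂ (Zeon n) c)) := by
    refine Commute.isNilpotent_mul_left (Commute.all _ _) ?_
    apply nilpotent_of_scalarPart_zero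
    simp [c]
  have := hn.isUnit_one_add
  have hc : IsUnit (algebraMap ℂ (Zeon n) c) := (isUnit_iff_ne_zero.mpr h).map _
  have key : u = (algebraMap ℂ (Zeon n) c) *
      (1 + (algebraMap ℂ (Zeon n) c⁻¹) * (u - algebraMap ℂ (Zeon n) c)) := by
    rw [mul_add, mul_one, ← mul_assoc, ← map_mul, mul_inv_cancel₀ h, map_one, one_mul]
    ring
  rw [key]
  exact hc.mul this

lemma sqrt_one_add {n : ℕ} (k : ℕ) : ∀ ε : Zeon n, ε ^ (2 ^ k) = 0 → ∃ s : Zeon n, s ^ 2 = 1 + ε := by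
  induction k with
  | zero =>
    intro ε hε
    norm_num at hε
    exact ⟨1, by simp [hε]⟩
  | succ k ih =>
    intro ε hε
    set a : Zeon n := algebraMap ℂ (Zeon n) (2⁻¹ : ℂ) with ha
    set v : Zeon n := 1 + a * ε with hv
    have hvu : IsUnit v := by
      refine IsNilpotent.isUnit_one_add ?_
      exact Commute.isNilpotent_mul_left (Commute.all _ _) ⟨2 ^ (k+1), hε⟩
    set w : Zeon n := Ring.inverse v with hw
    have hwv : w * v = 1 := Ring.inverse_mul_cancel v hvu
    set ε' : Zeon n := -(a * a * (ε ^ 2 * w ^ 2)) with hε'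
    have hε'pow : ε' ^ (2 ^ k) = 0 := by
      have e1 : ε' ^ (2 ^ k) = (-(a*a) * w ^ 2) ^ (2^k) * (ε ^ 2) ^ (2 ^ k) := by
        rw [hε', ← mul_pow]; ring_nf
      have e2 : (ε ^ 2) ^ (2 ^ k) = ε ^ (2 ^ (k+1)) := by
        rw [← pow_mul, pow_succ, mul_comm]
      rw [e1, e2, hε, mul_zero]
    obtain ⟨t, ht⟩ := ih ε' hε'pow
    refine ⟨v * t, ?_⟩
    have h2 : a * (2 : Zeon n) = 1 := by
      rw [ha, ← map_ofNat (algebraMap ℂ (Zeon n)) 2, ← map_mul]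
      norm_num
    have expand : (v * t) ^ 2 = v ^ 2 + v ^ 2 * ε' := by
      rw [mul_pow, ht]; ring
    rw [expand, hε']
    have hv2 : v ^ 2 * (ε ^ 2 * w ^ 2) = ε ^ 2 := by
      rw [show v ^ 2 * (ε ^ 2 * w ^ 2) = (w * v) * (w * v) * ε ^ 2 by ring, hwv]
      ring
    rw [show v ^ 2 * -(a * a * (ε ^ 2 * w ^ 2)) = -(a * a * (v ^ 2 * (ε ^2 * w ^ 2))) by ring,
      hv2, hv]
    have : (1 + a * ε) ^ 2 = 1 + (a * 2) * ε + a * a * ε ^ 2 := by ring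
    rw [this, h2]
    ring

lemma exists_sqrt {n : ℕ} {Δ : Zeon n} (h : scalarPart n Δ ≠ 0) :
    ∃ w : Zeon n, w ^ 2 = Δ ∧ scalarPart n w ≠ 0 := by
  set c := scalarPart n Δ with hc
  obtain ⟨d, hd⟩ : ∃ d : ℂ, d ^ 2 = c := by
    obtain ⟨d, hd⟩ := IsAlgClosed.exists_pow_nat_eq c (n := 2) (by norm_num)
    exact ⟨d, hd⟩
  have hd0 : d ≠ 0 := fun h0 => h (by rw [hc] at hd ⊢; rw [← hd, h0]; ring)
  set ε : Zeon n := algebraMap ℂ (Zeon n) (c⁻¹) * Δ - 1 with hε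
  have hscε : scalarPart n ε = 0 := by
    simp [hε, ← hc, inv_mul_cancel₀ h]
  have hεnil : IsNilpotent ε := nilpotent_of_scalarPart_zero hscε
  obtain ⟨m, hm⟩ := hεnil
  have hε2 : ε ^ (2 ^ m) = 0 := pow_eq_zero_of_le (@Nat.lt_two_pow_self m).le hm
  obtain ⟨s, hs⟩ := sqrt_one_add m ε hε2
  refine ⟨algebraMap ℂ (Zeon n) d * s, ?_, ?_⟩
  · rw [mul_pow, hs, ← map_pow, hd, mul_add, mul_one, hε, mul_sub,
      ← mul_assoc, ← map_mul, hc, mul_inv_cancel₀ h, map_one, one_mul]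
    ring
  · have hsc : (scalarPart n s) ^ 2 = 1 + scalarPart n ε := by
      rw [← map_pow, hs]; simp
    rw [hscε, add_zero] at hsc
    have hs0 : scalarPart n s ≠ 0 := fun h0 => by simp [h0] at hsc
    simp only [map_mul]
    have : scalarPart n (algebraMap ℂ (Zeon n) d) = d := by simp [scalarPart]
    rw [this]
    exact mul_ne_zero hd0 hs0

lemma sqrt_set {n : ℕ} {Δ w₀ : Zeon n} (hΔ : scalarPart n Δ ≠ 0)
    (hw₀ : w₀ ^ 2 = Δ) (hw₀s : scalarPart n w₀ ≠ 0) :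
    {w : Zeon n | w ^ 2 = Δ} = {w₀, -w₀} := by
  ext w
  simp only [Set.mem_setOf_eq, Set.mem_insert_iff, Set.mem_singleton_iff]
  constructor
  · intro hw
    have hfac : (w - w₀) * (w + w₀) = 0 := by
      have : w ^ 2 - w₀ ^ 2 = 0 := by rw [hw, hw₀, sub_self]
      calc (w - w₀) * (w + w₀) = w ^ 2 - w₀ ^ 2 := by ring
        _ = 0 := this
    have hsq : (scalarPart n w) ^ 2 = (scalarPart n w₀) ^ 2 := by
      rw [← map_pow, ← map_pow, hw, hw₀]
    rcases sq_eq_sq_iff_eq_or_eq_neg.mp hsq with h1 | h1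
    · left
      have hu : IsUnit (w + w₀) := by
        apply isUnit_of_scalarPart_ne_zero
        rw [map_add, h1]
        intro h0
        apply hw₀s
        have : (2 : ℂ) * scalarPart n w₀ = 0 := by linear_combination h0
        simpa using this
      have hfac' : (w + w₀) * (w - w₀) = 0 := by linear_combination hfac
      have := hu.mul_right_eq_zero.mp hfac'
      linear_combination this
    · right
      have hu : IsUnit (w - w₀) := by
        apply isUnit_of_scalarPart_ne_zero
        rw [map_sub, h1]
        intro h0
        apply hw₀s
        have : (2 : ℂ) * scalarPart n w₀ = 0 := by linear_combination -h0
        simpa using this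
      have := hu.mul_right_eq_zero.mp (show (w - w₀) * (w + w₀) = 0 from hfac)
      linear_combination this
  · rintro (rfl | rfl)
    · exact hw₀
    · linear_combination hw₀

set_option maxHeartbeats 2000000 in
/-- zeon quadratic formula. -/
theorem stmt15 (n : ℕ) (α β γ : Zeon n) (hα : scalarPart n α ≠ 0) :
    ({u : Zeon n | α * u ^ 2 + β * u + γ = 0} =
      {x : Zeon n | ∃ w : Zeon n, w ^ 2 = β ^ 2 - 4 * α * γ ∧
        x = ((2 : ℂ)⁻¹ • Ring.inverse α) * (w - β)}) ∧
    (β ^ 2 - 4 * α * γ = 0 →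
      {u : Zeon n | α * u ^ 2 + β * u + γ = 0} =
        {x : Zeon n | ∃ η : Zeon n, η ^ 2 = 0 ∧
          x = -((2 : ℂ)⁻¹ • (Ring.inverse α * β)) + η}) ∧
    (scalarPart n (β ^ 2 - 4 * α * γ) ≠ 0 →
      {u : Zeon n | α * u ^ 2 + β * u + γ = 0}.ncard = 2) := by
  have hαu : IsUnit α := isUnit_of_scalarPart_ne_zero hα
  set A : Zeon n := Ring.inverse α with hAdef
  have hA : A * α = 1 := Ring.inverse_mul_cancel α hαu
  have h2 : algebraMap ℂ (Zeon n) 2⁻¹ * 2 = 1 := by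
    rw [← map_ofNat (algebraMap ℂ (Zeon n)) 2, ← map_mul]
    norm_num
  have hsmul : ∀ x : Zeon n, ((2:ℂ)⁻¹ • x) = algebraMap ℂ (Zeon n) 2⁻¹ * x := fun x => by
    rw [Algebra.algebraMap_eq_smul_one, smul_mul_assoc, one_mul]
  have key2 : ∀ u : Zeon n, ((2:ℂ)⁻¹ • A) * (2 * α * u) = u := by
    intro u
    rw [hsmul, show algebraMap ℂ (Zeon n) 2⁻¹ * A * (2 * α * u)
      = (algebraMap ℂ (Zeon n) 2⁻¹ * 2) * ((A * α) * u) by ring, h2, hA, one_mul, one_mul]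
  have ident : ∀ u : Zeon n, (2 * α * u + β) ^ 2 - (β ^ 2 - 4 * α * γ)
      = 4 * α * (α * u ^ 2 + β * u + γ) := fun u => by ring
  have h4u : IsUnit ((4 : Zeon n) * α) := by
    refine IsUnit.mul ?_ hαu
    rw [← map_ofNat (algebraMap ℂ (Zeon n)) 4]
    exact (isUnit_iff_ne_zero.mpr (by norm_num)).map _
  have part1 : {u : Zeon n | α * u ^ 2 + β * u + γ = 0} =
      {x : Zeon n | ∃ w : Zeon n, w ^ 2 = β ^ 2 - 4 * α * γ ∧
        x = ((2 : ℂ)⁻¹ • A) * (w - β)} := by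
    ext u
    simp only [Set.mem_setOf_eq]
    constructor
    · intro hu
      refine ⟨2 * α * u + β, ?_, ?_⟩
      · have := ident u
        rw [hu, mul_zero] at this
        linear_combination this
      · rw [add_sub_cancel_right, key2]
    · rintro ⟨w, hw, rfl⟩
      have hx : 2 * α * (((2:ℂ)⁻¹ • A) * (w - β)) + β = w := by
        rw [show 2 * α * (((2:ℂ)⁻¹ • A) * (w - β)) = ((2:ℂ)⁻¹ • A) * (2 * α * (w - β)) by ring,
          key2, sub_add_cancel]
      have h0 : (4 : Zeon n) * α * (α * (((2:ℂ)⁻¹ • A) * (w - β)) ^ 2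
          + β * (((2:ℂ)⁻¹ • A) * (w - β)) + γ) = 0 := by
        rw [← ident, hx, hw, sub_self]
      exact h4u.mul_right_eq_zero.mp h0
  refine ⟨part1, ?_, ?_⟩
  · intro hΔ
    rw [part1, hΔ]
    ext x
    simp only [Set.mem_setOf_eq]
    constructor
    · rintro ⟨w, hw, rfl⟩
      refine ⟨((2:ℂ)⁻¹ • A) * w, ?_, ?_⟩
      · rw [mul_pow, hw, mul_zero]
      · rw [hsmul, hsmul]
        ring
    · rintro ⟨η, hη, rfl⟩
      refine ⟨2 * α * η, ?_, ?_⟩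
      · rw [show (2 * α * η) ^ 2 = 4 * α ^ 2 * η ^ 2 by ring, hη, mul_zero]
      · rw [show ((2:ℂ)⁻¹ • A) * (2 * α * η - β)
          = ((2:ℂ)⁻¹ • A) * (2 * α * η) - ((2:ℂ)⁻¹ • A) * β by ring, key2,
          hsmul, hsmul]
        ring
  · intro hΔ
    obtain ⟨w₀, hw₀, hw₀s⟩ := exists_sqrt hΔ
    have hset := sqrt_set hΔ hw₀ hw₀s
    rw [part1]
    have himg : {x : Zeon n | ∃ w : Zeon n, w ^ 2 = β ^ 2 - 4 * α * γ ∧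
        x = ((2 : ℂ)⁻¹ • A) * (w - β)}
        = (fun w => ((2 : ℂ)⁻¹ • A) * (w - β)) '' {w : Zeon n | w ^ 2 = β ^ 2 - 4 * α * γ} := by
      ext x
      simp only [Set.mem_setOf_eq, Set.mem_image]
      exact ⟨fun ⟨w, h1, h2⟩ => ⟨w, h1, h2.symm⟩, fun ⟨w, h1, h2⟩ => ⟨w, h1, h2.symm⟩⟩
    have hinj : Function.Injective (fun w : Zeon n => ((2 : ℂ)⁻¹ • A) * (w - β)) := by
      intro w z hwz
      simp only at hwz
      have h1 : 2 * α * (((2:ℂ)⁻¹ • A) * (w - β)) + β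
          = 2 * α * (((2:ℂ)⁻¹ • A) * (z - β)) + β := by rw [hwz]
      rw [show 2 * α * (((2:ℂ)⁻¹ • A) * (w - β)) = ((2:ℂ)⁻¹ • A) * (2 * α * (w - β)) by ring,
        show 2 * α * (((2:ℂ)⁻¹ • A) * (z - β)) = ((2:ℂ)⁻¹ • A) * (2 * α * (z - β)) by ring,
        key2, key2] at h1
      linear_combination h1
    rw [himg, Set.ncard_image_of_injective _ hinj, hset]
    apply Set.ncard_pair
    intro h0
    apply hw₀s
    have : (2 : ℂ) * scalarPart n w₀ = 0 := by
      have := congrArg (scalarPart n) h0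
      simp only [map_neg] at this
      linear_combination this
    simpa using this
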